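/- arXiv:2505.16302 — 3 statements merged into one kernel-verified Lean document; each statement's English description precedes it below -/
import Mathlib

section
/- Under the block structure Σ̂ = G̃ D G̃ᵀ with G̃ = [[G₁₁,0],[G₂₁,G̃₂₂]] and D = diag(D₁, D₂), Stein's loss decomposes as L(Σ̂,Σ) = tr(L⁻¹ G D₁ Gᵀ L⁻ᵀ) − log det D₁ − log det(L₁₁⁻¹G₁₁G₁₁ᵀL₁₁⁻ᵀ) + tr(L₂₂⁻¹G̃₂₂D₂G̃₂₂ᵀL₂₂⁻ᵀ) − log det(L₂₂⁻¹G̃₂₂D₂G̃₂₂ᵀL₂₂⁻ᵀ), where G = [G₁₁; G₂₁] is the p×n matrix of the first n columns. -/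
open Matrix

/-- Stein's loss of a matrix `A` relative to `S`. -/
noncomputable def steinLoss {p : Type*} [Fintype p] [DecidableEq p]
    (A S : Matrix p p ℝ) : ℝ :=
  (A * S⁻¹).trace - Real.log (A * S⁻¹).det

lemma my_trace_fromBlocks {n m : ℕ} (A : Matrix (Fin n) (Fin n) ℝ) (B : Matrix (Fin n) (Fin m) ℝ)
    (C : Matrix (Fin m) (Fin n) ℝ) (D : Matrix (Fin m) (Fin m) ℝ) :
    (Matrix.fromBlocks A B C D).trace = A.trace + D.trace := by
  simp [Matrix.trace, Matrix.diag, Fintype.sum_sum_type, Matrix.fromBlocks]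

/-- Decomposition of Stein's loss under the block Cholesky structure. -/
theorem stmt8 {n m : ℕ}
    (L11 G11 : Matrix (Fin n) (Fin n) ℝ) (L21 G21 : Matrix (Fin m) (Fin n) ℝ)
    (L22 G22t : Matrix (Fin m) (Fin m) ℝ)
    (d1 : Fin n → ℝ) (d2 : Fin m → ℝ)
    (hL11low : ∀ i j : Fin n, i < j → L11 i j = 0) (hL11 : IsUnit L11.det)
    (hL22low : ∀ i j : Fin m, i < j → L22 i j = 0) (hL22 : IsUnit L22.det)
    (hG11low : ∀ i j : Fin n, i < j → G11 i j = 0) (hG11 : IsUnit G11.det)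
    (hG22 : IsUnit G22t.det)
    (hd1 : ∀ j, 0 < d1 j) (hd2 : ∀ j, 0 < d2 j) :
    steinLoss
        (Matrix.fromBlocks G11 0 G21 G22t
          * Matrix.fromBlocks (Matrix.diagonal d1) 0 0 (Matrix.diagonal d2)
          * (Matrix.fromBlocks G11 0 G21 G22t)ᵀ)
        (Matrix.fromBlocks L11 0 L21 L22 * (Matrix.fromBlocks L11 0 L21 L22)ᵀ)
      = ((Matrix.fromBlocks L11 0 L21 L22)⁻¹ * Matrix.fromRows G11 G21
            * Matrix.diagonal d1 * (Matrix.fromRows G11 G21)ᵀ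
            * ((Matrix.fromBlocks L11 0 L21 L22)⁻¹)ᵀ).trace
        - Real.log (Matrix.diagonal d1).det
        - Real.log (L11⁻¹ * G11 * G11ᵀ * (L11⁻¹)ᵀ).det
        + (L22⁻¹ * G22t * Matrix.diagonal d2 * G22tᵀ * (L22⁻¹)ᵀ).trace
        - Real.log (L22⁻¹ * G22t * Matrix.diagonal d2 * G22tᵀ * (L22⁻¹)ᵀ).det := by
  set Lb := Matrix.fromBlocks L11 0 L21 L22 with hLb
  set Gb := Matrix.fromBlocks G11 0 G21 G22t with hGb
  set Db := Matrix.fromBlocks (Matrix.diagonal d1) 0 0 (Matrix.diagonal d2) with hDb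
  set Gf := Matrix.fromRows G11 G21 with hGf
  set Ef := Matrix.fromRows (0 : Matrix (Fin n) (Fin m) ℝ) G22t with hEf
  have hLbdet : Lb.det = L11.det * L22.det := Matrix.det_fromBlocks_zero₁₂ _ _ _
  have hGbdet : Gb.det = G11.det * G22t.det := Matrix.det_fromBlocks_zero₁₂ _ _ _
  have hDbdet : Db.det = (Matrix.diagonal d1).det * (Matrix.diagonal d2).det :=
    Matrix.det_fromBlocks_zero₁₂ _ _ _
  have hLbU : IsUnit Lb.det := by rw [hLbdet]; exact hL11.mul hL22
  -- inverse of Lb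
  have hLinv : Lb⁻¹ = Matrix.fromBlocks L11⁻¹ 0 (-(L22⁻¹ * L21 * L11⁻¹)) L22⁻¹ :=
    Matrix.inv_fromBlocks_zero₁₂_of_isUnit_iff _ _ _
      (iff_of_true ((Matrix.isUnit_iff_isUnit_det _).mpr hL11)
        ((Matrix.isUnit_iff_isUnit_det _).mpr hL22))
  -- S⁻¹
  have hSinv : (Lb * Lbᵀ)⁻¹ = (Lb⁻¹)ᵀ * Lb⁻¹ := by
    rw [Matrix.mul_inv_rev, Matrix.transpose_nonsing_inv]
  -- decomposition of Gb * Db * Gbᵀ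
  have hGDG : Gb * Db * Gbᵀ
      = Gf * Matrix.diagonal d1 * Gfᵀ + Ef * Matrix.diagonal d2 * Efᵀ := by
    rw [hGb, hDb, hGf, hEf]
    simp only [Matrix.fromBlocks_transpose, Matrix.fromBlocks_multiply, Matrix.transpose_fromRows,
      Matrix.fromRows_mul, Matrix.fromRows_mul_fromCols, Matrix.fromBlocks_add,
      Matrix.transpose_zero, Matrix.zero_mul, Matrix.mul_zero, add_zero, zero_add,
      Matrix.zero_mul, zero_mul, mul_zero,
      Matrix.mul_fromCols, Matrix.fromRows_fromCols_eq_fromBlocks]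
    ext (i|i) (j|j) <;> simp [Matrix.fromBlocks, Matrix.fromCols]
  -- inverse applied to Ef
  have hLE : Lb⁻¹ * Ef = Matrix.fromRows 0 (L22⁻¹ * G22t) := by
    rw [hLinv, hEf, Matrix.fromBlocks_mul_fromRows]
    simp
  -- trace identity
  have hTrace : ((Gb * Db * Gbᵀ) * (Lb * Lbᵀ)⁻¹).trace
      = (Lb⁻¹ * Gf * Matrix.diagonal d1 * Gfᵀ * (Lb⁻¹)ᵀ).trace
        + (L22⁻¹ * G22t * Matrix.diagonal d2 * G22tᵀ * (L22⁻¹)ᵀ).trace := by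
    rw [hSinv, ← Matrix.mul_assoc, Matrix.trace_mul_cycle, hGDG, Matrix.mul_add,
      Matrix.add_mul, Matrix.trace_add]
    congr 1
    · simp [Matrix.mul_assoc]
    · have h1 : Lb⁻¹ * (Ef * Matrix.diagonal d2 * Efᵀ) * (Lb⁻¹)ᵀ
          = (Lb⁻¹ * Ef) * Matrix.diagonal d2 * (Lb⁻¹ * Ef)ᵀ := by
        simp [Matrix.transpose_mul, Matrix.mul_assoc]
      rw [h1, hLE]
      rw [Matrix.transpose_fromRows, Matrix.fromRows_mul, Matrix.fromRows_mul_fromCols,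
        my_trace_fromBlocks]
      simp [Matrix.mul_assoc, Matrix.transpose_mul]
  -- determinant scalars
  have hg1 : G11.det ≠ 0 := hG11.ne_zero
  have hg2 : G22t.det ≠ 0 := hG22.ne_zero
  have hl1 : L11.det ≠ 0 := hL11.ne_zero
  have hl2 : L22.det ≠ 0 := hL22.ne_zero
  have hp1 : (Matrix.diagonal d1).det ≠ 0 := by
    rw [Matrix.det_diagonal]
    exact ne_of_gt (Finset.prod_pos fun i _ => hd1 i)
  have hp2 : (Matrix.diagonal d2).det ≠ 0 := by
    rw [Matrix.det_diagonal]
    exact ne_of_gt (Finset.prod_pos fun i _ => hd2 i)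
  have hdetL : ((Gb * Db * Gbᵀ) * (Lb * Lbᵀ)⁻¹).det
      = (G11.det * G22t.det) * ((Matrix.diagonal d1).det * (Matrix.diagonal d2).det)
        * (G11.det * G22t.det)
        * ((L11.det * L22.det) * (L11.det * L22.det))⁻¹ := by
    rw [Matrix.det_mul, Matrix.det_nonsing_inv, Matrix.det_mul, Matrix.det_mul,
      Matrix.det_mul, Matrix.det_transpose, Matrix.det_transpose, hGbdet, hDbdet, hLbdet,
      Ring.inverse_eq_inv']
  have hdet1 : (L11⁻¹ * G11 * G11ᵀ * (L11⁻¹)ᵀ).det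
      = L11.det⁻¹ * G11.det * G11.det * L11.det⁻¹ := by
    simp [Matrix.det_mul, Matrix.det_transpose, Matrix.det_nonsing_inv, Ring.inverse_eq_inv']
  have hdet2 : (L22⁻¹ * G22t * Matrix.diagonal d2 * G22tᵀ * (L22⁻¹)ᵀ).det
      = L22.det⁻¹ * G22t.det * (Matrix.diagonal d2).det * G22t.det * L22.det⁻¹ := by
    simp [Matrix.det_mul, Matrix.det_transpose, Matrix.det_nonsing_inv, Ring.inverse_eq_inv']
  rw [steinLoss, hTrace, hdetL, hdet1, hdet2]
  have h1 : L11.det⁻¹ * G11.det * G11.det * L11.det⁻¹ ≠ 0 :=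
    mul_ne_zero (mul_ne_zero (mul_ne_zero (inv_ne_zero hl1) hg1) hg1) (inv_ne_zero hl1)
  have h2 : L22.det⁻¹ * G22t.det * (Matrix.diagonal d2).det * G22t.det * L22.det⁻¹ ≠ 0 :=
    mul_ne_zero (mul_ne_zero (mul_ne_zero (mul_ne_zero (inv_ne_zero hl2) hg2) hp2) hg2)
      (inv_ne_zero hl2)
  have hkey : Real.log
      (G11.det * G22t.det * ((Matrix.diagonal d1).det * (Matrix.diagonal d2).det)
        * (G11.det * G22t.det) * (L11.det * L22.det * (L11.det * L22.det))⁻¹)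
      = Real.log (Matrix.diagonal d1).det
        + Real.log (L11.det⁻¹ * G11.det * G11.det * L11.det⁻¹)
        + Real.log (L22.det⁻¹ * G22t.det * (Matrix.diagonal d2).det * G22t.det * L22.det⁻¹) := by
    rw [show G11.det * G22t.det * ((Matrix.diagonal d1).det * (Matrix.diagonal d2).det)
        * (G11.det * G22t.det) * (L11.det * L22.det * (L11.det * L22.det))⁻¹
        = (Matrix.diagonal d1).det * ((L11.det⁻¹ * G11.det * G11.det * L11.det⁻¹)
          * (L22.det⁻¹ * G22t.det * (Matrix.diagonal d2).det * G22t.det * L22.det⁻¹)) by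
      simp only [mul_inv]; ring]
    rw [Real.log_mul hp1 (mul_ne_zero h1 h2), Real.log_mul h1 h2]
    ring
  rw [hkey]
  ring
end

section
/- If G̃₂₂ D₂ G̃₂₂ᵀ = Σ₂.₁ and d_j = (g_jᵀ Σ⁻¹ g_j)⁻¹ for j = 1,…,n, then Stein's loss of Σ̂ = G̃ D G̃ᵀ equals p + Σ_{j=1}^n log(g_jᵀΣ⁻¹g_j) − log det(L₁₁⁻¹G₁₁G₁₁ᵀL₁₁⁻ᵀ), and this is the minimum value of the loss over all positive diagonal D and invertible G̃₂₂. -/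
open Matrix

lemma trace_eq_sum_eigs {k : ℕ} {A : Matrix (Fin k) (Fin k) ℝ} (hA : A.IsHermitian) :
    A.trace = ∑ i, hA.eigenvalues i := by
  conv_lhs => rw [hA.spectral_theorem, Unitary.conjStarAlgAut_apply]
  rw [trace_mul_cycle]
  have h1 : (star (hA.eigenvectorUnitary : Matrix (Fin k) (Fin k) ℝ)) *
      (hA.eigenvectorUnitary : Matrix (Fin k) (Fin k) ℝ) = 1 :=
    Matrix.mem_unitaryGroup_iff'.mp hA.eigenvectorUnitary.2
  rw [h1, Matrix.one_mul, trace_diagonal]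
  simp [RCLike.ofReal_real_eq_id]

lemma stein_ge {k : ℕ} {B : Matrix (Fin k) (Fin k) ℝ} (hB : B.PosDef) :
    (k : ℝ) ≤ B.trace - Real.log B.det := by
  have hpos := hB.eigenvalues_pos
  rw [trace_eq_sum_eigs hB.1, hB.1.det_eq_prod_eigenvalues]
  simp only [RCLike.ofReal_real_eq_id, id]
  rw [Real.log_prod (fun i _ => (hpos i).ne'), ← Finset.sum_sub_distrib]
  calc (k:ℝ) = ∑ _i : Fin k, (1:ℝ) := by simp
  _ ≤ _ := Finset.sum_le_sum fun i _ => by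
      have := Real.log_le_sub_one_of_pos (hpos i); linarith


lemma posDef_conj {k : ℕ} {W : Matrix (Fin k) (Fin k) ℝ} (hW : IsUnit W.det)
    {d : Fin k → ℝ} (hd : ∀ i, 0 < d i) : (W * Matrix.diagonal d * Wᵀ).PosDef := by
  have h1 : (Matrix.diagonal d).PosDef := .diagonal hd
  have hinj : Function.Injective (Wᵀ.mulVec) :=
    Matrix.mulVec_injective_iff_isUnit.mpr
      ((Matrix.isUnit_iff_isUnit_det _).mpr (by simpa using hW))
  refine PosDef.of_dotProduct_mulVec_pos ?_ (fun x hx => ?_)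
  · have := Matrix.isHermitian_mul_mul_conjTranspose W h1.1
    rwa [conjTranspose_eq_transpose_of_trivial] at this
  · have hy : Wᵀ *ᵥ x ≠ 0 := fun h => hx (hinj (by simpa using h))
    have := h1.dotProduct_mulVec_pos hy
    simpa [Matrix.mul_assoc, ← Matrix.mulVec_mulVec, Matrix.dotProduct_mulVec,
      Matrix.mulVec_transpose, star_trivial] using this



lemma trace_fromBlocks' {a b : ℕ} (A : Matrix (Fin a) (Fin a) ℝ) (B : Matrix (Fin a) (Fin b) ℝ)
    (C : Matrix (Fin b) (Fin a) ℝ) (D : Matrix (Fin b) (Fin b) ℝ) :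
    (fromBlocks A B C D).trace = A.trace + D.trace := by
  simp [Matrix.trace, Fintype.sum_sum_type]

lemma trace_diagonal_mul' {k : ℕ} (d : Fin k → ℝ) (M : Matrix (Fin k) (Fin k) ℝ) :
    (Matrix.diagonal d * M).trace = ∑ j, d j * M j j := by
  simp [Matrix.trace, Matrix.diag, Matrix.diagonal_mul]

lemma blocktrace {n m : ℕ} (C11 : Matrix (Fin n) (Fin n) ℝ) (C21 : Matrix (Fin m) (Fin n) ℝ)
    (C22 : Matrix (Fin m) (Fin m) ℝ) (d1 : Fin n → ℝ) (d2 : Fin m → ℝ) :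
    (fromBlocks C11 0 C21 C22 * fromBlocks (diagonal d1) 0 0 (diagonal d2)
      * (fromBlocks C11 0 C21 C22)ᵀ).trace
    = (∑ j, d1 j * (C11ᵀ * C11 + C21ᵀ * C21) j j)
      + (C22 * diagonal d2 * C22ᵀ).trace := by
  rw [fromBlocks_transpose, fromBlocks_multiply, fromBlocks_multiply, trace_fromBlocks']
  simp only [Matrix.mul_zero, Matrix.zero_mul, add_zero, zero_add, Matrix.mul_empty,
    Matrix.trace_add]
  rw [trace_mul_cycle C11 (diagonal d1) C11ᵀ, trace_mul_cycle C21 (diagonal d1) C21ᵀ,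
    Matrix.trace_mul_comm _ (diagonal d1), Matrix.trace_mul_comm _ (diagonal d1),
    trace_diagonal_mul', trace_diagonal_mul']
  have : ∀ j, d1 j * (C11ᵀ * C11 + C21ᵀ * C21) j j
      = d1 j * (C11ᵀ * C11) j j + d1 j * (C21ᵀ * C21) j j := by
    intro j; simp [Matrix.add_apply, mul_add]
  simp only [this, Finset.sum_add_distrib]
  ring

lemma key {n m : ℕ}
    (L11 G11 : Matrix (Fin n) (Fin n) ℝ) (L21 G21 : Matrix (Fin m) (Fin n) ℝ)
    (L22 : Matrix (Fin m) (Fin m) ℝ)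
    (hL11 : IsUnit L11.det) (hL22 : IsUnit L22.det) (hG11 : IsUnit G11.det)
    (d1 : Fin n → ℝ) (d2 : Fin m → ℝ) (G22 : Matrix (Fin m) (Fin m) ℝ)
    (hd1 : ∀ j, d1 j ≠ 0) (hd2 : ∀ j, d2 j ≠ 0) (hG22 : IsUnit G22.det) :
    steinLoss
        (fromBlocks G11 0 G21 G22 * fromBlocks (diagonal d1) 0 0 (diagonal d2)
          * (fromBlocks G11 0 G21 G22)ᵀ)
        (fromBlocks L11 0 L21 L22 * (fromBlocks L11 0 L21 L22)ᵀ)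
      = (∑ j, d1 j * ((fromRows G11 G21)ᵀ
            * (fromBlocks L11 0 L21 L22 * (fromBlocks L11 0 L21 L22)ᵀ)⁻¹
            * fromRows G11 G21) j j)
        + ((L22⁻¹ * G22) * diagonal d2 * (L22⁻¹ * G22)ᵀ).trace
        - (∑ j, Real.log (d1 j))
        - Real.log ((L22⁻¹ * G22) * diagonal d2 * (L22⁻¹ * G22)ᵀ).det
        - Real.log (L11⁻¹ * G11 * G11ᵀ * (L11⁻¹)ᵀ).det := by
  have hLdet : (fromBlocks L11 0 L21 L22).det = L11.det * L22.det :=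
    det_fromBlocks_zero₁₂ _ _ _
  have hLu : IsUnit (fromBlocks L11 0 L21 L22).det := by rw [hLdet]; exact hL11.mul hL22
  have hLinv : (fromBlocks L11 0 L21 L22)⁻¹
      = fromBlocks L11⁻¹ 0 (-(L22⁻¹ * L21 * L11⁻¹)) L22⁻¹ :=
    inv_fromBlocks_zero₁₂_of_isUnit_iff _ _ _
      (iff_of_true ((isUnit_iff_isUnit_det _).mpr hL11) ((isUnit_iff_isUnit_det _).mpr hL22))
  have hSinv : (fromBlocks L11 0 L21 L22 * (fromBlocks L11 0 L21 L22)ᵀ)⁻¹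
      = ((fromBlocks L11 0 L21 L22)⁻¹)ᵀ * (fromBlocks L11 0 L21 L22)⁻¹ := by
    rw [Matrix.mul_inv_rev, ← Matrix.transpose_nonsing_inv]
  have hC : (fromBlocks L11 0 L21 L22)⁻¹ * fromBlocks G11 0 G21 G22
      = fromBlocks (L11⁻¹ * G11) 0
          (-(L22⁻¹ * L21 * L11⁻¹) * G11 + L22⁻¹ * G21) (L22⁻¹ * G22) := by
    rw [hLinv, fromBlocks_multiply]; simp
  have hGr : (fromBlocks L11 0 L21 L22)⁻¹ * fromRows G11 G21
      = fromRows (L11⁻¹ * G11) (-(L22⁻¹ * L21 * L11⁻¹) * G11 + L22⁻¹ * G21) := by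
    rw [hLinv, fromBlocks_mul_fromRows]; simp
  have l1ne : L11.det ≠ 0 := hL11.ne_zero
  have l2ne : L22.det ≠ 0 := hL22.ne_zero
  have g1ne : G11.det ≠ 0 := hG11.ne_zero
  have g2ne : G22.det ≠ 0 := hG22.ne_zero
  have hp1 : (∏ j, d1 j) ≠ 0 := Finset.prod_ne_zero_iff.mpr fun j _ => hd1 j
  have hp2 : (∏ j, d2 j) ≠ 0 := Finset.prod_ne_zero_iff.mpr fun j _ => hd2 j
  -- Gram matrix identity
  have hGram : (fromRows G11 G21)ᵀ
        * (fromBlocks L11 0 L21 L22 * (fromBlocks L11 0 L21 L22)ᵀ)⁻¹ * fromRows G11 G21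
      = (L11⁻¹ * G11)ᵀ * (L11⁻¹ * G11)
        + (-(L22⁻¹ * L21 * L11⁻¹) * G11 + L22⁻¹ * G21)ᵀ
          * (-(L22⁻¹ * L21 * L11⁻¹) * G11 + L22⁻¹ * G21) := by
    rw [hSinv, show (fromRows G11 G21)ᵀ
          * (((fromBlocks L11 0 L21 L22)⁻¹)ᵀ * (fromBlocks L11 0 L21 L22)⁻¹)
          * fromRows G11 G21
        = ((fromBlocks L11 0 L21 L22)⁻¹ * fromRows G11 G21)ᵀ
          * ((fromBlocks L11 0 L21 L22)⁻¹ * fromRows G11 G21) from by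
      simp only [Matrix.transpose_mul, Matrix.mul_assoc], hGr, transpose_fromRows,
      fromCols_mul_fromRows]
  -- trace identity
  have htr : (fromBlocks G11 0 G21 G22 * fromBlocks (diagonal d1) 0 0 (diagonal d2)
        * (fromBlocks G11 0 G21 G22)ᵀ
        * (fromBlocks L11 0 L21 L22 * (fromBlocks L11 0 L21 L22)ᵀ)⁻¹).trace
      = (∑ j, d1 j * ((fromRows G11 G21)ᵀ
            * (fromBlocks L11 0 L21 L22 * (fromBlocks L11 0 L21 L22)ᵀ)⁻¹
            * fromRows G11 G21) j j)
        + ((L22⁻¹ * G22) * diagonal d2 * (L22⁻¹ * G22)ᵀ).trace := by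
    rw [hGram, hSinv, ← Matrix.mul_assoc, Matrix.trace_mul_comm]
    rw [show (fromBlocks L11 0 L21 L22)⁻¹ * (fromBlocks G11 0 G21 G22
          * fromBlocks (diagonal d1) 0 0 (diagonal d2) * (fromBlocks G11 0 G21 G22)ᵀ
          * ((fromBlocks L11 0 L21 L22)⁻¹)ᵀ)
        = ((fromBlocks L11 0 L21 L22)⁻¹ * fromBlocks G11 0 G21 G22)
          * fromBlocks (diagonal d1) 0 0 (diagonal d2)
          * ((fromBlocks L11 0 L21 L22)⁻¹ * fromBlocks G11 0 G21 G22)ᵀ from by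
      simp only [Matrix.transpose_mul, Matrix.mul_assoc]]
    rw [hC, blocktrace]
  -- determinant identity
  have hAdet : (fromBlocks G11 0 G21 G22 * fromBlocks (diagonal d1) 0 0 (diagonal d2)
        * (fromBlocks G11 0 G21 G22)ᵀ
        * (fromBlocks L11 0 L21 L22 * (fromBlocks L11 0 L21 L22)ᵀ)⁻¹).det
      = (∏ j, d1 j) * ((L22⁻¹ * G22) * diagonal d2 * (L22⁻¹ * G22)ᵀ).det
        * (L11⁻¹ * G11 * G11ᵀ * (L11⁻¹)ᵀ).det := by
    simp only [Matrix.det_mul, Matrix.det_transpose, Matrix.det_nonsing_inv,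
      Matrix.det_fromBlocks_zero₁₂, Matrix.det_diagonal, Ring.inverse_eq_inv']
    field_simp
  have hW2det : ((L22⁻¹ * G22) * diagonal d2 * (L22⁻¹ * G22)ᵀ).det ≠ 0 := by
    simp only [Matrix.det_mul, Matrix.det_transpose, Matrix.det_nonsing_inv,
      Matrix.det_diagonal, Ring.inverse_eq_inv']
    simp [mul_eq_zero, inv_eq_zero, l2ne, g2ne, hp2]
  have hW1det : (L11⁻¹ * G11 * G11ᵀ * (L11⁻¹)ᵀ).det ≠ 0 := by
    simp only [Matrix.det_mul, Matrix.det_transpose, Matrix.det_nonsing_inv,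
      Matrix.det_diagonal, Ring.inverse_eq_inv']
    simp [mul_eq_zero, inv_eq_zero, l1ne, g1ne]
  have hlog : Real.log (fromBlocks G11 0 G21 G22 * fromBlocks (diagonal d1) 0 0 (diagonal d2)
        * (fromBlocks G11 0 G21 G22)ᵀ
        * (fromBlocks L11 0 L21 L22 * (fromBlocks L11 0 L21 L22)ᵀ)⁻¹).det
      = (∑ j, Real.log (d1 j))
        + Real.log ((L22⁻¹ * G22) * diagonal d2 * (L22⁻¹ * G22)ᵀ).det
        + Real.log (L11⁻¹ * G11 * G11ᵀ * (L11⁻¹)ᵀ).det := by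
    rw [hAdet, Real.log_mul (mul_ne_zero hp1 hW2det) hW1det, Real.log_mul hp1 hW2det,
      Real.log_prod (fun j _ => hd1 j)]
  rw [steinLoss, htr, hlog]
  ring


lemma apos {n m : ℕ}
    (L11 G11 : Matrix (Fin n) (Fin n) ℝ) (L21 G21 : Matrix (Fin m) (Fin n) ℝ)
    (L22 : Matrix (Fin m) (Fin m) ℝ)
    (hLu : IsUnit (fromBlocks L11 0 L21 L22).det) (hG11 : IsUnit G11.det) (j : Fin n) :
    0 < ((fromRows G11 G21)ᵀ
        * (fromBlocks L11 0 L21 L22 * (fromBlocks L11 0 L21 L22)ᵀ)⁻¹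
        * fromRows G11 G21) j j := by
  have hSinv : (fromBlocks L11 0 L21 L22 * (fromBlocks L11 0 L21 L22)ᵀ)⁻¹
      = ((fromBlocks L11 0 L21 L22)⁻¹)ᵀ * (fromBlocks L11 0 L21 L22)⁻¹ := by
    rw [Matrix.mul_inv_rev, ← Matrix.transpose_nonsing_inv]
  have hMa : (fromRows G11 G21)ᵀ
        * (fromBlocks L11 0 L21 L22 * (fromBlocks L11 0 L21 L22)ᵀ)⁻¹ * fromRows G11 G21
      = ((fromBlocks L11 0 L21 L22)⁻¹ * fromRows G11 G21)ᵀ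
        * ((fromBlocks L11 0 L21 L22)⁻¹ * fromRows G11 G21) := by
    rw [hSinv]; simp only [Matrix.transpose_mul, Matrix.mul_assoc]
  rw [hMa]
  set M := (fromBlocks L11 0 L21 L22)⁻¹ * fromRows G11 G21 with hM
  have hent : (Mᵀ * M) j j = ∑ i, M i j * M i j := by
    rw [Matrix.mul_apply]; simp only [Matrix.transpose_apply]
  rw [hent]
  have hcol : ¬ (∀ i, M i j = 0) := by
    intro hall
    have hLM : fromBlocks L11 0 L21 L22 * M = fromRows G11 G21 := by
      rw [hM, ← Matrix.mul_assoc, Matrix.mul_nonsing_inv _ hLu, Matrix.one_mul]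
    have hz : ∀ t, (fromRows G11 G21) t j = 0 := by
      intro t; rw [← hLM]; simp [Matrix.mul_apply, hall]
    exact hG11.ne_zero (Matrix.det_eq_zero_of_column_eq_zero j
      (fun i => by simpa using hz (Sum.inl i)))
  push_neg at hcol
  obtain ⟨i, hi⟩ := hcol
  exact Finset.sum_pos' (fun i _ => mul_self_nonneg _)
    ⟨i, Finset.mem_univ i, mul_self_pos.mpr hi⟩

/-- With the optimal choices `d_j = (g_jᵀ Σ⁻¹ g_j)⁻¹` and
`G̃₂₂ D₂ G̃₂₂ᵀ = Σ₂.₁ = L₂₂ L₂₂ᵀ`, Stein's loss equals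
`p + Σ_j log(g_jᵀ Σ⁻¹ g_j) - log det(L₁₁⁻¹ G₁₁ G₁₁ᵀ L₁₁⁻ᵀ)`, and this value is
the minimum of the loss over all positive diagonal `D` and invertible `G̃₂₂`. -/
theorem stmt10 {n m : ℕ}
    (L11 G11 : Matrix (Fin n) (Fin n) ℝ) (L21 G21 : Matrix (Fin m) (Fin n) ℝ)
    (L22 G22t : Matrix (Fin m) (Fin m) ℝ)
    (d1 : Fin n → ℝ) (d2 : Fin m → ℝ)
    (hL11low : ∀ i j : Fin n, i < j → L11 i j = 0) (hL11 : IsUnit L11.det)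
    (hL22low : ∀ i j : Fin m, i < j → L22 i j = 0) (hL22 : IsUnit L22.det)
    (hG11low : ∀ i j : Fin n, i < j → G11 i j = 0) (hG11 : IsUnit G11.det)
    (hG22 : IsUnit G22t.det)
    (hd1 : ∀ j, d1 j = (((Matrix.fromRows G11 G21)ᵀ
        * (Matrix.fromBlocks L11 0 L21 L22 * (Matrix.fromBlocks L11 0 L21 L22)ᵀ)⁻¹
        * Matrix.fromRows G11 G21) j j)⁻¹)
    (hd2pos : ∀ j, 0 < d2 j)
    (hSchur : G22t * Matrix.diagonal d2 * G22tᵀ = L22 * L22ᵀ) :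
    steinLoss
        (Matrix.fromBlocks G11 0 G21 G22t
          * Matrix.fromBlocks (Matrix.diagonal d1) 0 0 (Matrix.diagonal d2)
          * (Matrix.fromBlocks G11 0 G21 G22t)ᵀ)
        (Matrix.fromBlocks L11 0 L21 L22 * (Matrix.fromBlocks L11 0 L21 L22)ᵀ)
      = ((n : ℝ) + (m : ℝ))
        + (∑ j, Real.log (((Matrix.fromRows G11 G21)ᵀ
            * (Matrix.fromBlocks L11 0 L21 L22 * (Matrix.fromBlocks L11 0 L21 L22)ᵀ)⁻¹
            * Matrix.fromRows G11 G21) j j))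
        - Real.log (L11⁻¹ * G11 * G11ᵀ * (L11⁻¹)ᵀ).det ∧
    ∀ (d1' : Fin n → ℝ) (d2' : Fin m → ℝ) (G22t' : Matrix (Fin m) (Fin m) ℝ),
      (∀ j, 0 < d1' j) → (∀ j, 0 < d2' j) → IsUnit G22t'.det →
      steinLoss
          (Matrix.fromBlocks G11 0 G21 G22t
            * Matrix.fromBlocks (Matrix.diagonal d1) 0 0 (Matrix.diagonal d2)
            * (Matrix.fromBlocks G11 0 G21 G22t)ᵀ)
          (Matrix.fromBlocks L11 0 L21 L22 * (Matrix.fromBlocks L11 0 L21 L22)ᵀ)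
        ≤ steinLoss
            (Matrix.fromBlocks G11 0 G21 G22t'
              * Matrix.fromBlocks (Matrix.diagonal d1') 0 0 (Matrix.diagonal d2')
              * (Matrix.fromBlocks G11 0 G21 G22t')ᵀ)
            (Matrix.fromBlocks L11 0 L21 L22 * (Matrix.fromBlocks L11 0 L21 L22)ᵀ) := by
  have hLu : IsUnit (Matrix.fromBlocks L11 0 L21 L22).det := by
    rw [Matrix.det_fromBlocks_zero₁₂]; exact hL11.mul hL22
  have ha : ∀ j, 0 < ((Matrix.fromRows G11 G21)ᵀ
      * (Matrix.fromBlocks L11 0 L21 L22 * (Matrix.fromBlocks L11 0 L21 L22)ᵀ)⁻¹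
      * Matrix.fromRows G11 G21) j j := fun j => apos L11 G11 L21 G21 L22 hLu hG11 j
  have hd1ne : ∀ j, d1 j ≠ 0 := fun j => by rw [hd1 j]; exact inv_ne_zero (ha j).ne'
  have hd2ne : ∀ j, d2 j ≠ 0 := fun j => (hd2pos j).ne'
  have hW2 : (L22⁻¹ * G22t) * Matrix.diagonal d2 * (L22⁻¹ * G22t)ᵀ = 1 := by
    have h1 : (L22⁻¹ * G22t) * Matrix.diagonal d2 * (L22⁻¹ * G22t)ᵀ
        = L22⁻¹ * ((G22t * Matrix.diagonal d2 * G22tᵀ) * (L22ᵀ)⁻¹) := by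
      rw [Matrix.transpose_mul, Matrix.transpose_nonsing_inv]
      simp only [Matrix.mul_assoc]
    rw [h1, hSchur, show L22 * L22ᵀ * (L22ᵀ)⁻¹ = L22 * (L22ᵀ * (L22ᵀ)⁻¹) from
      Matrix.mul_assoc _ _ _, Matrix.mul_nonsing_inv _ (by rwa [Matrix.det_transpose]),
      Matrix.mul_one, Matrix.nonsing_inv_mul _ hL22]
  have hEq : steinLoss
        (Matrix.fromBlocks G11 0 G21 G22t
          * Matrix.fromBlocks (Matrix.diagonal d1) 0 0 (Matrix.diagonal d2)
          * (Matrix.fromBlocks G11 0 G21 G22t)ᵀ)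
        (Matrix.fromBlocks L11 0 L21 L22 * (Matrix.fromBlocks L11 0 L21 L22)ᵀ)
      = ((n : ℝ) + (m : ℝ))
        + (∑ j, Real.log (((Matrix.fromRows G11 G21)ᵀ
            * (Matrix.fromBlocks L11 0 L21 L22 * (Matrix.fromBlocks L11 0 L21 L22)ᵀ)⁻¹
            * Matrix.fromRows G11 G21) j j))
        - Real.log (L11⁻¹ * G11 * G11ᵀ * (L11⁻¹)ᵀ).det := by
    rw [key L11 G11 L21 G21 L22 hL11 hL22 hG11 d1 d2 G22t hd1ne hd2ne hG22, hW2]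
    have hsum1 : (∑ j, d1 j * ((Matrix.fromRows G11 G21)ᵀ
        * (Matrix.fromBlocks L11 0 L21 L22 * (Matrix.fromBlocks L11 0 L21 L22)ᵀ)⁻¹
        * Matrix.fromRows G11 G21) j j) = (n : ℝ) := by
      have h1 : ∀ j, d1 j * ((Matrix.fromRows G11 G21)ᵀ
          * (Matrix.fromBlocks L11 0 L21 L22 * (Matrix.fromBlocks L11 0 L21 L22)ᵀ)⁻¹
          * Matrix.fromRows G11 G21) j j = 1 := fun j => by
        rw [hd1 j]; exact inv_mul_cancel₀ (ha j).ne'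
      simp only [h1]
      simp
    have hsum2 : (∑ j, Real.log (d1 j))
        = - ∑ j, Real.log (((Matrix.fromRows G11 G21)ᵀ
            * (Matrix.fromBlocks L11 0 L21 L22 * (Matrix.fromBlocks L11 0 L21 L22)ᵀ)⁻¹
            * Matrix.fromRows G11 G21) j j) := by
      rw [← Finset.sum_neg_distrib]
      exact Finset.sum_congr rfl fun j _ => by rw [hd1 j, Real.log_inv]
    rw [hsum1, hsum2]
    simp only [Matrix.trace_one, Matrix.det_one, Real.log_one, Fintype.card_fin]
    push_cast
    ring
  refine ⟨hEq, ?_⟩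
  intro d1' d2' G22t' hd1' hd2' hG22'
  rw [hEq, key L11 G11 L21 G21 L22 hL11 hL22 hG11 d1' d2' G22t'
    (fun j => (hd1' j).ne') (fun j => (hd2' j).ne') hG22']
  have hWu : IsUnit (L22⁻¹ * G22t').det := by
    refine isUnit_iff_ne_zero.mpr ?_
    simp [Matrix.det_mul, Matrix.det_nonsing_inv, Ring.inverse_eq_inv',
      hL22.ne_zero, hG22'.ne_zero]
  have hBpd : ((L22⁻¹ * G22t') * Matrix.diagonal d2' * (L22⁻¹ * G22t')ᵀ).PosDef :=
    posDef_conj hWu hd2'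
  have hstein := stein_ge hBpd
  have hterm : ∀ j, 1 + Real.log (((Matrix.fromRows G11 G21)ᵀ
        * (Matrix.fromBlocks L11 0 L21 L22 * (Matrix.fromBlocks L11 0 L21 L22)ᵀ)⁻¹
        * Matrix.fromRows G11 G21) j j)
      ≤ d1' j * ((Matrix.fromRows G11 G21)ᵀ
        * (Matrix.fromBlocks L11 0 L21 L22 * (Matrix.fromBlocks L11 0 L21 L22)ᵀ)⁻¹
        * Matrix.fromRows G11 G21) j j - Real.log (d1' j) := by
    intro j
    have hx : 0 < d1' j * ((Matrix.fromRows G11 G21)ᵀ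
        * (Matrix.fromBlocks L11 0 L21 L22 * (Matrix.fromBlocks L11 0 L21 L22)ᵀ)⁻¹
        * Matrix.fromRows G11 G21) j j := mul_pos (hd1' j) (ha j)
    have hlog := Real.log_le_sub_one_of_pos hx
    rw [Real.log_mul (hd1' j).ne' (ha j).ne'] at hlog
    linarith
  have hsum := Finset.sum_le_sum (fun j (_ : j ∈ Finset.univ) => hterm j)
  rw [Finset.sum_add_distrib, Finset.sum_sub_distrib] at hsum
  simp only [Finset.sum_const, Finset.card_univ, Fintype.card_fin, nsmul_eq_mul,
    mul_one] at hsum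
  linarith
end

section
/- For the Gaussian likelihood L(X;Σ) ∝ det(L₁₁)^{−n} det(L₂₂)^{−n} exp(−½‖L₁₁⁻¹G₁₁‖_F²) exp(−½‖L₂₂⁻¹(G₂₁ − L₂₁L₁₁⁻¹G₁₁)‖_F²), the supremum over L₁₁ (lower triangular, positive diagonal) and L₂₁ is attained at L₁₁ = n^{−1/2}G₁₁ and L₂₁ = n^{−1/2}G₂₁, and the resulting profile likelihood is proportional to det(L₂₂)^{−n}, which is unbounded as det(L₂₂) → 0; hence L₂₂ is not identifiable. -/
open Matrix

/-- Squared Frobenius norm. -/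
noncomputable def sqFrob {a b : Type*} [Fintype a] [Fintype b]
    (M : Matrix a b ℝ) : ℝ :=
  ∑ i, ∑ j, (M i j) ^ 2

/-- The Gaussian likelihood in Cholesky coordinates. -/
noncomputable def lik {n m : ℕ} (nn : ℕ)
    (G11 : Matrix (Fin n) (Fin n) ℝ) (G21 : Matrix (Fin m) (Fin n) ℝ)
    (L11 : Matrix (Fin n) (Fin n) ℝ) (L21 : Matrix (Fin m) (Fin n) ℝ)
    (L22 : Matrix (Fin m) (Fin m) ℝ) : ℝ :=
  L11.det ^ (-(nn : ℤ)) * L22.det ^ (-(nn : ℤ))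
    * Real.exp (-(1 / 2) * sqFrob (L11⁻¹ * G11))
    * Real.exp (-(1 / 2) * sqFrob (L22⁻¹ * (G21 - L21 * L11⁻¹ * G11)))

section auxlemmas
variable {k : ℕ}

lemma low_det (M : Matrix (Fin k) (Fin k) ℝ) (hM : ∀ i j : Fin k, i < j → M i j = 0) :
    M.det = ∏ i, M i i :=
  Matrix.det_of_lowerTriangular M (fun i j h => hM i j h)

lemma low_mul_diag {M N : Matrix (Fin k) (Fin k) ℝ}
    (hM : ∀ i j : Fin k, i < j → M i j = 0) (hN : ∀ i j : Fin k, i < j → N i j = 0)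
    (i : Fin k) : (M * N) i i = M i i * N i i := by
  rw [Matrix.mul_apply]
  refine Finset.sum_eq_single i (fun b _ hb => ?_) (by simp)
  rcases lt_or_gt_of_ne hb with h | h
  · rw [hN b i h, mul_zero]
  · rw [hM i b h, zero_mul]

lemma low_inv {M : Matrix (Fin k) (Fin k) ℝ}
    (hM : ∀ i j : Fin k, i < j → M i j = 0) (hd : ∀ i, 0 < M i i) :
    (∀ i j : Fin k, i < j → M⁻¹ i j = 0) ∧ (∀ i, M⁻¹ i i = (M i i)⁻¹) := by
  have hdet : M.det ≠ 0 := by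
    rw [low_det M hM]
    exact ne_of_gt (Finset.prod_pos (fun i _ => hd i))
  have hu : IsUnit M.det := isUnit_iff_ne_zero.mpr hdet
  haveI : Invertible M := M.invertibleOfIsUnitDet hu
  have hBT : M.BlockTriangular OrderDual.toDual := fun i j h => hM i j h
  have hinv : M⁻¹.BlockTriangular OrderDual.toDual :=
    Matrix.blockTriangular_inv_of_blockTriangular hBT
  have hlow : ∀ i j : Fin k, i < j → M⁻¹ i j = 0 := fun i j h => hinv h
  refine ⟨hlow, fun i => ?_⟩
  have h1 : (M⁻¹ * M) i i = 1 := by rw [Matrix.nonsing_inv_mul M hu, Matrix.one_apply_eq]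
  rw [low_mul_diag hlow hM i] at h1
  exact eq_inv_of_mul_eq_one_left h1

lemma sqFrob_nonneg {a b : Type*} [Fintype a] [Fintype b] (M : Matrix a b ℝ) :
    0 ≤ sqFrob M :=
  Finset.sum_nonneg fun _ _ => Finset.sum_nonneg fun _ _ => sq_nonneg _

lemma scalar_key {a : ℝ} (ha : 0 < a) (nn : ℕ) (hnn : 0 < nn) :
    a ^ nn * Real.exp (-(1 / 2) * a ^ 2)
      ≤ (Real.sqrt nn) ^ nn * Real.exp (-(1 / 2) * nn) := by
  have hs : (0:ℝ) < Real.sqrt nn := Real.sqrt_pos.mpr (by positivity)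
  have h1 : a ^ nn = Real.exp (nn * Real.log a) := by
    rw [Real.exp_nat_mul, Real.exp_log ha]
  have h2 : (Real.sqrt nn : ℝ) ^ nn = Real.exp (nn * Real.log (Real.sqrt nn)) := by
    rw [Real.exp_nat_mul, Real.exp_log hs]
  rw [h1, h2, ← Real.exp_add, ← Real.exp_add, Real.exp_le_exp,
    Real.log_sqrt (by positivity)]
  have hlog : Real.log (a ^ 2 / nn) ≤ a ^ 2 / nn - 1 :=
    Real.log_le_sub_one_of_pos (by positivity)
  have hlogeq : Real.log (a ^ 2 / nn) = 2 * Real.log a - Real.log nn := by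
    rw [Real.log_div (by positivity) (by positivity), Real.log_pow]
    push_cast; ring
  rw [hlogeq] at hlog
  have hn : (0:ℝ) < nn := by positivity
  have := mul_le_mul_of_nonneg_left hlog (le_of_lt (half_pos hn))
  have hdiv : (nn:ℝ) / 2 * (a ^ 2 / nn) = a ^ 2 / 2 := by field_simp
  nlinarith [this]

lemma matrix_key {kk : ℕ} (hkk : 0 < kk) (A : Matrix (Fin kk) (Fin kk) ℝ)
    (hd : ∀ i, 0 < A i i) :
    (∏ i, A i i) ^ kk * Real.exp (-(1/2) * sqFrob A)
      ≤ (Real.sqrt kk) ^ (kk * kk) * Real.exp (-(1/2) * ((kk:ℝ) * kk)) := by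
  have hdiag_le : ∑ i, (A i i) ^ 2 ≤ sqFrob A := by
    refine Finset.sum_le_sum (fun i _ => ?_)
    exact Finset.single_le_sum (f := fun j => A i j ^ 2)
      (fun j _ => sq_nonneg _) (Finset.mem_univ i)
  have hexp : Real.exp (-(1/2) * sqFrob A) ≤ Real.exp (-(1/2) * ∑ i, (A i i) ^ 2) := by
    apply Real.exp_le_exp.mpr; nlinarith [hdiag_le]
  have step1 : (∏ i, A i i) ^ kk * Real.exp (-(1/2) * sqFrob A)
      ≤ ∏ i, ((A i i) ^ kk * Real.exp (-(1/2) * (A i i) ^ 2)) := by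
    rw [Finset.prod_mul_distrib, ← Finset.prod_pow]
    have h2 : Real.exp (-(1/2) * ∑ i, (A i i) ^ 2)
        = ∏ i, Real.exp (-(1/2) * (A i i) ^ 2) := by
      rw [← Real.exp_sum, ← Finset.mul_sum]
    rw [← h2]
    have hp : (0:ℝ) ≤ ∏ i, A i i ^ kk :=
      Finset.prod_nonneg fun i _ => pow_nonneg (hd i).le _
    exact mul_le_mul_of_nonneg_left hexp hp
  refine step1.trans ?_
  have step2 : ∏ i, ((A i i) ^ kk * Real.exp (-(1/2) * (A i i) ^ 2))
      ≤ ∏ (_ : Fin kk), ((Real.sqrt kk) ^ kk * Real.exp (-(1/2) * kk)) := by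
    refine Finset.prod_le_prod
      (fun i _ => mul_nonneg (pow_nonneg (hd i).le _) (Real.exp_nonneg _)) (fun i _ => ?_)
    exact scalar_key (hd i) kk hkk
  refine step2.trans ?_
  rw [Finset.prod_const, Finset.card_univ, Fintype.card_fin, mul_pow, ← pow_mul]
  have : Real.exp (-(1/2) * kk) ^ kk = Real.exp (-(1/2) * ((kk:ℝ) * kk)) := by
    rw [← Real.exp_nat_mul]; ring_nf
  rw [this]

lemma profile_key {n : ℕ} (hn : 0 < n) (G11 : Matrix (Fin n) (Fin n) ℝ)
    (hG11low : ∀ i j : Fin n, i < j → G11 i j = 0)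
    (hG11diag : ∀ i, 0 < G11 i i)
    (L11 : Matrix (Fin n) (Fin n) ℝ)
    (hL11low : ∀ i j : Fin n, i < j → L11 i j = 0)
    (hL11diag : ∀ i, 0 < L11 i i) :
    L11.det ^ (-(n:ℤ)) * Real.exp (-(1/2) * sqFrob (L11⁻¹ * G11))
      ≤ ((Real.sqrt n)⁻¹ • G11).det ^ (-(n:ℤ)) * Real.exp (-(1/2) * ((n:ℝ) * n)) := by
  have hs : (0:ℝ) < Real.sqrt n := Real.sqrt_pos.mpr (by positivity)
  obtain ⟨hIlow, hIdiag⟩ := low_inv hL11low hL11diag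
  set A := L11⁻¹ * G11 with hA_def
  have hAdiag : ∀ i, A i i = (L11 i i)⁻¹ * G11 i i := by
    intro i; rw [hA_def, low_mul_diag hIlow hG11low i, hIdiag i]
  have hAdpos : ∀ i, 0 < A i i := fun i => by
    rw [hAdiag i]; exact mul_pos (inv_pos.mpr (hL11diag i)) (hG11diag i)
  set P := ∏ i, G11 i i with hP_def
  have hP : (0:ℝ) < P := Finset.prod_pos fun i _ => hG11diag i
  set Q := ∏ i, L11 i i with hQ_def
  have hQ : (0:ℝ) < Q := Finset.prod_pos fun i _ => hL11diag i
  have hPA : ∏ i, A i i = Q⁻¹ * P := by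
    rw [hP_def, hQ_def, ← Finset.prod_inv_distrib, ← Finset.prod_mul_distrib]
    exact Finset.prod_congr rfl fun i _ => hAdiag i
  have hdetL : L11.det = Q := low_det L11 hL11low
  have hLzpow : L11.det ^ (-(n:ℤ)) = (∏ i, A i i) ^ n / P ^ n := by
    rw [hdetL, _root_.zpow_neg, zpow_natCast, hPA, mul_pow, inv_pow]
    field_simp
  have hdetB : ((Real.sqrt n)⁻¹ • G11).det = ((Real.sqrt n)⁻¹) ^ n * P := by
    rw [Matrix.det_smul, low_det G11 hG11low, Fintype.card_fin]
  have hRzpow : ((Real.sqrt n)⁻¹ • G11).det ^ (-(n:ℤ))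
      = (Real.sqrt n) ^ (n * n) / P ^ n := by
    rw [hdetB, _root_.zpow_neg, zpow_natCast, mul_pow, ← pow_mul, inv_pow,
      mul_inv, inv_inv, div_eq_mul_inv]
  rw [hLzpow, hRzpow, div_mul_eq_mul_div, div_mul_eq_mul_div,
    div_le_div_iff_of_pos_right (by positivity : (0:ℝ) < P ^ n)]
  exact matrix_key hn A hAdpos

lemma sqFrob_smul_one (c : ℝ) :
    sqFrob (c • (1 : Matrix (Fin k) (Fin k) ℝ)) = (k:ℝ) * c ^ 2 := by
  have h : ∀ i : Fin k, ∑ j, ((c • (1 : Matrix (Fin k) (Fin k) ℝ)) i j) ^ 2 = c ^ 2 := by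
    intro i
    rw [Finset.sum_eq_single i]
    · simp [Matrix.smul_apply, Matrix.one_apply_eq]
    · intro b _ hb
      simp [Matrix.smul_apply, Matrix.one_apply_ne' hb]
    · simp
  simp only [sqFrob, h, Finset.sum_const, Finset.card_univ, Fintype.card_fin, nsmul_eq_mul]

end auxlemmas

/-- The likelihood is maximized over `(L₁₁, L₂₁)` at
`L₁₁ = n^{-1/2} G₁₁`, `L₂₁ = n^{-1/2} G₂₁`; the profile likelihood is
proportional to `det(L₂₂)^{-n}` and is unbounded, so `L₂₂` is not identifiable. -/
theorem stmt16 {n m : ℕ} (hn : 0 < n) (hm : 0 < m)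
    (G11 : Matrix (Fin n) (Fin n) ℝ)
    (hG11low : ∀ i j : Fin n, i < j → G11 i j = 0)
    (hG11diag : ∀ i, 0 < G11 i i)
    (G21 : Matrix (Fin m) (Fin n) ℝ) :
    (∀ L22 : Matrix (Fin m) (Fin m) ℝ,
      (∀ i j : Fin m, i < j → L22 i j = 0) → (∀ i, 0 < L22 i i) →
      ∀ (L11 : Matrix (Fin n) (Fin n) ℝ) (L21 : Matrix (Fin m) (Fin n) ℝ),
        (∀ i j : Fin n, i < j → L11 i j = 0) → (∀ i, 0 < L11 i i) →
        lik n G11 G21 L11 L21 L22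
          ≤ lik n G11 G21 ((Real.sqrt n)⁻¹ • G11) ((Real.sqrt n)⁻¹ • G21) L22) ∧
    (∃ c : ℝ, 0 < c ∧ ∀ L22 : Matrix (Fin m) (Fin m) ℝ,
      (∀ i j : Fin m, i < j → L22 i j = 0) → (∀ i, 0 < L22 i i) →
      lik n G11 G21 ((Real.sqrt n)⁻¹ • G11) ((Real.sqrt n)⁻¹ • G21) L22
        = c * L22.det ^ (-(n : ℤ))) ∧
    (∀ M : ℝ, ∃ L22 : Matrix (Fin m) (Fin m) ℝ,
      (∀ i j : Fin m, i < j → L22 i j = 0) ∧ (∀ i, 0 < L22 i i) ∧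
      M < lik n G11 G21 ((Real.sqrt n)⁻¹ • G11) ((Real.sqrt n)⁻¹ • G21) L22) := by
  have hs : (0:ℝ) < Real.sqrt n := Real.sqrt_pos.mpr (by positivity)
  set s : ℝ := Real.sqrt n with hs_def
  have hGd : (0:ℝ) < G11.det := by
    rw [low_det G11 hG11low]; exact Finset.prod_pos fun i _ => hG11diag i
  have hBd : (0:ℝ) < (s⁻¹ • G11).det := by
    rw [Matrix.det_smul, Fintype.card_fin]; positivity
  have hGu : IsUnit (s⁻¹ • G11).det := isUnit_iff_ne_zero.mpr hBd.ne'
  have hG11eq : s • (s⁻¹ • G11) = G11 := by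
    rw [smul_smul, mul_inv_cancel₀ hs.ne', one_smul]
  have hmulB : (s⁻¹ • G11)⁻¹ * G11 = s • (1 : Matrix (Fin n) (Fin n) ℝ) := by
    have h := congrArg (fun X => (s⁻¹ • G11)⁻¹ * X) hG11eq
    rw [← h, Matrix.mul_smul, Matrix.nonsing_inv_mul _ hGu]
  have hsq : sqFrob ((s⁻¹ • G11)⁻¹ * G11) = (n:ℝ) * n := by
    rw [hmulB, sqFrob_smul_one, Real.sq_sqrt (by positivity : (0:ℝ) ≤ n)]
  have hzero : G21 - (s⁻¹ • G21) * (s⁻¹ • G11)⁻¹ * G11 = 0 := by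
    rw [Matrix.mul_assoc, hmulB, Matrix.mul_smul, Matrix.mul_one, smul_smul,
      mul_inv_cancel₀ hs.ne', one_smul, sub_self]
  have hsqz : sqFrob (0 : Matrix (Fin m) (Fin n) ℝ) = 0 := by simp [sqFrob]
  have hlik : ∀ L22 : Matrix (Fin m) (Fin m) ℝ,
      lik n G11 G21 (s⁻¹ • G11) (s⁻¹ • G21) L22
        = ((s⁻¹ • G11).det ^ (-(n:ℤ)) * Real.exp (-(1/2) * ((n:ℝ) * n)))
          * L22.det ^ (-(n:ℤ)) := by
    intro L22
    unfold lik
    rw [hsq, hzero, Matrix.mul_zero, hsqz, mul_zero, Real.exp_zero, mul_one]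
    ring
  refine ⟨?_, ⟨(s⁻¹ • G11).det ^ (-(n:ℤ)) * Real.exp (-(1/2) * ((n:ℝ) * n)), ?_, ?_⟩, ?_⟩
  · -- part 1
    intro L22 h22l h22d L11 L21 h11l h11d
    have h22 : (0:ℝ) < L22.det := by
      rw [low_det L22 h22l]; exact Finset.prod_pos fun i _ => h22d i
    have hd22 : (0:ℝ) < L22.det ^ (-(n:ℤ)) := zpow_pos h22 _
    have h11 : (0:ℝ) < L11.det := by
      rw [low_det L11 h11l]; exact Finset.prod_pos fun i _ => h11d i
    have hd11 : (0:ℝ) < L11.det ^ (-(n:ℤ)) := zpow_pos h11 _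
    have hE2 : Real.exp (-(1/2) * sqFrob (L22⁻¹ * (G21 - L21 * L11⁻¹ * G11))) ≤ 1 := by
      rw [Real.exp_le_one_iff]
      nlinarith [sqFrob_nonneg (L22⁻¹ * (G21 - L21 * L11⁻¹ * G11))]
    have hprof := profile_key hn G11 hG11low hG11diag L11 h11l h11d
    rw [hlik L22]
    unfold lik
    nlinarith [mul_le_mul_of_nonneg_right hprof hd22.le,
      mul_le_mul_of_nonneg_left hE2
        (le_of_lt (mul_pos (mul_pos hd11 hd22)
          (Real.exp_pos (-(1/2) * sqFrob (L11⁻¹ * G11))))),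
      Real.exp_pos (-(1/2) * sqFrob (L11⁻¹ * G11))]
  · -- c > 0
    positivity
  · -- part 2
    intro L22 _ _
    rw [hlik L22]
  · -- part 3
    intro M
    set c : ℝ := (s⁻¹ • G11).det ^ (-(n:ℤ)) * Real.exp (-(1/2) * ((n:ℝ) * n)) with hc_def
    have hc : 0 < c := by positivity
    obtain ⟨kk, hkk⟩ := exists_nat_gt (M / c)
    set t : ℝ := ((kk:ℝ) + 1)⁻¹ with ht_def
    have ht : 0 < t := by positivity
    have ht1 : t ≤ 1 := by
      rw [ht_def]
      rw [inv_le_one_iff₀]; right; linarith [Nat.cast_nonneg (α := ℝ) kk]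
    refine ⟨t • 1, ?_, ?_, ?_⟩
    · intro i j hij
      simp [Matrix.smul_apply, Matrix.one_apply_ne (ne_of_lt hij)]
    · intro i
      simpa [Matrix.smul_apply, Matrix.one_apply_eq] using ht
    · rw [hlik (t • 1)]
      have hdet : (t • (1 : Matrix (Fin m) (Fin m) ℝ)).det = t ^ m := by
        rw [Matrix.det_smul, Fintype.card_fin, Matrix.det_one, mul_one]
      rw [hdet]
      have hz : (t ^ m : ℝ) ^ (-(n:ℤ)) = (t ^ (m * n))⁻¹ := by
        rw [_root_.zpow_neg, zpow_natCast, ← pow_mul]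
      rw [hz]
      have hmn : 1 ≤ m * n := by
        calc 1 = 1 * 1 := (one_mul 1).symm
        _ ≤ m * n := Nat.mul_le_mul hm hn
      have htpow : t ^ (m * n) ≤ t := by
        calc t ^ (m * n) ≤ t ^ 1 := pow_le_pow_of_le_one ht.le ht1 hmn
        _ = t := pow_one t
      have hinv : t⁻¹ ≤ (t ^ (m * n))⁻¹ := by
        rw [← one_div, ← one_div (t ^ (m * n))]
        exact one_div_le_one_div_of_le (pow_pos ht _) htpow
      have htinv : t⁻¹ = (kk:ℝ) + 1 := by rw [ht_def, inv_inv]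
      have hM : M < (kk:ℝ) * c := (div_lt_iff₀ hc).mp hkk
      have hle : c * ((kk:ℝ) + 1) ≤ c * (t ^ (m * n))⁻¹ := by
        apply mul_le_mul_of_nonneg_left _ hc.le
        rw [← htinv]; exact hinv
      nlinarith [hle, hM, hc]
end
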